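/- arXiv:1705.04784 — 2 statements merged into one kernel-verified Lean document; each statement's English description precedes it below -/
import Mathlib

section
/- Let x = w·T·z be a scale mixture with w independent of z, E(w⁴) < ∞, z having i.i.d. coordinates with mean 0, variance 1, finite fourth moment, and T positive definite. Then for A = (T²)⁻¹, Var(x' A x) = p·E(w⁴)·Var(z₁²) + p²·Var(w²). In particular, if w² is non-degenerate, Var(x'Ax) is of order at least p². -/
open MeasureTheory ProbabilityTheory Matrix

/-- For the scale mixture x = w·T·z and A = (T²)⁻¹,
Var(x'Ax) = p·E(w⁴)·Var(z₁²) + p²·Var(w²). -/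
theorem scale_mixture_quadratic_form_variance
    {Ω : Type} [MeasurableSpace Ω] (μ : Measure Ω) [IsProbabilityMeasure μ]
    (p : ℕ) (hp : 0 < p) (T : Matrix (Fin p) (Fin p) ℝ) (hTpd : T.PosDef)
    (w : Ω → ℝ) (z : Ω → Fin p → ℝ)
    (hwz : IndepFun w z μ)
    (hzindep : iIndepFun (fun i ω => z ω i) μ)
    (hzid : ∀ i j : Fin p, IdentDistrib (fun ω => z ω i) (fun ω => z ω j) μ μ)
    (hw4 : Integrable (fun ω => (w ω) ^ 4) μ)
    (hz4 : ∀ i, Integrable (fun ω => (z ω i) ^ 4) μ)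
    (hzmean : ∀ i, ∫ ω, z ω i ∂μ = 0)
    (hzvar : ∀ i, ∫ ω, (z ω i) ^ 2 ∂μ = 1)
    (x : Ω → Fin p → ℝ) (hx : ∀ ω, x ω = w ω • T.mulVec (z ω)) :
    variance (fun ω => dotProduct (x ω) (((T * T)⁻¹).mulVec (x ω))) μ =
      p * (∫ ω, (w ω) ^ 4 ∂μ) * variance (fun ω => (z ω ⟨0, hp⟩) ^ 2) μ +
        (p : ℝ) ^ 2 * variance (fun ω => (w ω) ^ 2) μ := by
  classical
  -- notation
  set S : Ω → ℝ := fun ω => ∑ i, (z ω i) ^ 2 with hS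
  -- Step 1: the quadratic form equals w² * S pointwise
  have hdet : IsUnit T.det := isUnit_iff_ne_zero.mpr (ne_of_gt hTpd.det_pos)
  have hsymm : Tᵀ = T := by simpa using hTpd.1.eq
  have hQeq : (fun ω => dotProduct (x ω) (((T * T)⁻¹).mulVec (x ω)))
      = fun ω => (w ω) ^ 2 * S ω := by
    funext ω
    rw [hx ω]
    have h1 : (T * T)⁻¹ = T⁻¹ * T⁻¹ := Matrix.mul_inv_rev T T
    rw [Matrix.mulVec_smul, dotProduct_smul, smul_dotProduct]
    have h2 : T.mulVec (z ω) = Matrix.vecMul (z ω) T := by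
      conv_lhs => rw [← hsymm]
      rw [Matrix.mulVec_transpose]
    have h3 : ((T * T)⁻¹).mulVec (T.mulVec (z ω)) = T⁻¹.mulVec (z ω) := by
      rw [Matrix.mulVec_mulVec, h1, Matrix.mul_assoc, Matrix.nonsing_inv_mul T hdet,
        Matrix.mul_one]
    rw [h3, h2, dotProduct_mulVec, Matrix.vecMul_vecMul,
      Matrix.mul_nonsing_inv T hdet, Matrix.vecMul_one]
    rw [show dotProduct (z ω) (z ω) = S ω from by
      simp [dotProduct, hS, sq]]
    simp [smul_eq_mul]
    ring
  rw [hQeq]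
  -- measurability helpers
  have msq : Measurable fun t : ℝ => t ^ 2 := by measurability
  have m4 : Measurable fun t : ℝ => t ^ 4 := by measurability
  have mψ : Measurable fun v : Fin p → ℝ => ∑ i, (v i) ^ 2 := by
    exact Finset.measurable_sum _ fun i _ => (measurable_pi_apply i).pow_const 2
  have mψ2 : Measurable fun v : Fin p → ℝ => (∑ i, (v i) ^ 2) ^ 2 := mψ.pow_const 2
  -- AESM of squares via sqrt of fourth powers
  have aesm_sq : ∀ (f : Ω → ℝ), Integrable (fun ω => (f ω) ^ 4) μ →
      AEStronglyMeasurable (fun ω => (f ω) ^ 2) μ := by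
    intro f hf
    have : (fun ω => (f ω) ^ 2) = fun ω => Real.sqrt ((f ω) ^ 4) := by
      funext ω
      rw [show (f ω) ^ 4 = ((f ω) ^ 2) ^ 2 by ring, Real.sqrt_sq (by positivity)]
    rw [this]
    exact Real.continuous_sqrt.comp_aestronglyMeasurable hf.aestronglyMeasurable
  have aw2 : AEStronglyMeasurable (fun ω => (w ω) ^ 2) μ := aesm_sq w hw4
  have az2 : ∀ i, AEStronglyMeasurable (fun ω => (z ω i) ^ 2) μ := fun i => aesm_sq _ (hz4 i)
  -- MemLp 2 facts
  have memw2 : MemLp (fun ω => (w ω) ^ 2) 2 μ := by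
    rw [memLp_two_iff_integrable_sq aw2]
    simpa [show ∀ t : ℝ, (t ^ 2) ^ 2 = t ^ 4 from fun t => by ring] using hw4
  have memz2 : ∀ i, MemLp (fun ω => (z ω i) ^ 2) 2 μ := by
    intro i
    rw [memLp_two_iff_integrable_sq (az2 i)]
    simpa [show ∀ t : ℝ, (t ^ 2) ^ 2 = t ^ 4 from fun t => by ring] using hz4 i
  have memS : MemLp S 2 μ := by
    have heq : S = ∑ i : Fin p, fun ω => (z ω i) ^ 2 := by
      funext ω; simp [hS]
    rw [heq]
    exact memLp_finset_sum' (μ := μ) (p := 2) Finset.univ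
      (f := fun i ω => (z ω i) ^ 2) (fun i _ => memz2 i)
  have aS : AEStronglyMeasurable S μ := memS.aestronglyMeasurable
  -- E S = p
  have hES : ∫ ω, S ω ∂μ = p := by
    rw [hS]
    rw [integral_finset_sum _ fun i _ => (memz2 i).integrable one_le_two]
    simp [hzvar]
  -- Var S = p * Var z₀²
  have hindep_sq : ∀ i j : Fin p, i ≠ j →
      IndepFun (fun ω => (z ω i) ^ 2) (fun ω => (z ω j) ^ 2) μ :=
    fun i j hij => (hzindep.indepFun hij).comp msq msq
  have hVarS : variance S μ = p * variance (fun ω => (z ω ⟨0, hp⟩) ^ 2) μ := by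
    have hsum := IndepFun.variance_sum (μ := μ) (X := fun i ω => (z ω i) ^ 2)
      (s := Finset.univ) (fun i _ => memz2 i)
      (fun i _ j _ hij => hindep_sq i j hij)
    have heqvar : ∀ i : Fin p, variance (fun ω => (z ω i) ^ 2) μ
        = variance (fun ω => (z ω ⟨0, hp⟩) ^ 2) μ :=
      fun i => ((hzid i ⟨0, hp⟩).comp msq).variance_eq
    have : variance S μ = ∑ i : Fin p, variance (fun ω => (z ω i) ^ 2) μ := by
      rw [hS]
      convert hsum using 2
      funext ω
      simp [Finset.sum_apply]
    rw [this, Finset.sum_congr rfl fun i _ => heqvar i]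
    simp [mul_comm]
  -- E S² = Var S + p²
  have hES2 : ∫ ω, (S ω) ^ 2 ∂μ = variance S μ + (p : ℝ) ^ 2 := by
    have := variance_eq_sub memS
    have h1 : μ[S ^ 2] = ∫ ω, (S ω) ^ 2 ∂μ := by
      congr 1
    have h2 : μ[S] = ∫ ω, S ω ∂μ := rfl
    rw [h1, h2, hES] at this
    linarith
  -- independence of w² and S, and of w⁴ and S²
  have hW2S : IndepFun (fun ω => (w ω) ^ 2) S μ := by
    have := hwz.comp msq mψ
    exact this
  have hW4S2 : IndepFun (fun ω => (w ω) ^ 4) (fun ω => (S ω) ^ 2) μ := by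
    have := hwz.comp m4 mψ2
    exact this
  -- moments of Q
  have hEQ : ∫ ω, (w ω) ^ 2 * S ω ∂μ = (∫ ω, (w ω) ^ 2 ∂μ) * p := by
    have := hW2S.integral_mul_eq_mul_integral aw2 aS
    simpa [hES] using this
  have hEQ2 : ∫ ω, ((w ω) ^ 2 * S ω) ^ 2 ∂μ
      = (∫ ω, (w ω) ^ 4 ∂μ) * (∫ ω, (S ω) ^ 2 ∂μ) := by
    have aS2 : AEStronglyMeasurable (fun ω => (S ω) ^ 2) μ := by
      exact aS.pow 2
    have := hW4S2.integral_mul_eq_mul_integral hw4.aestronglyMeasurable aS2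
    have heq : (fun ω => (w ω) ^ 4) * (fun ω => (S ω) ^ 2)
        = fun ω => ((w ω) ^ 2 * S ω) ^ 2 := by
      funext ω; simp only [Pi.mul_apply]; ring
    rw [heq] at this
    exact this
  -- MemLp of Q
  have aQ : AEStronglyMeasurable (fun ω => (w ω) ^ 2 * S ω) μ := aw2.mul aS
  have memQ : MemLp (fun ω => (w ω) ^ 2 * S ω) 2 μ := by
    rw [memLp_two_iff_integrable_sq aQ]
    have heq : (fun ω => ((w ω) ^ 2 * S ω) ^ 2)
        = (fun ω => (w ω) ^ 4) * fun ω => (S ω) ^ 2 := by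
      funext ω; simp only [Pi.mul_apply]; ring
    rw [heq]
    exact hW4S2.integrable_mul hw4 memS.integrable_sq
  -- variance of w²
  have hVarW : variance (fun ω => (w ω) ^ 2) μ
      = (∫ ω, (w ω) ^ 4 ∂μ) - (∫ ω, (w ω) ^ 2 ∂μ) ^ 2 := by
    rw [variance_eq_sub memw2]
    congr 1
    rw [show ((fun ω => (w ω) ^ 2) ^ 2 : Ω → ℝ) = fun ω => (w ω) ^ 4 by
      funext ω; simp only [Pi.pow_apply]; ring]
  -- conclude
  rw [variance_eq_sub memQ, hVarW]
  have e1 : μ[(fun ω => (w ω) ^ 2 * S ω) ^ 2] = ∫ ω, ((w ω) ^ 2 * S ω) ^ 2 ∂μ := by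
    congr 1
  have e2 : μ[fun ω => (w ω) ^ 2 * S ω] = ∫ ω, (w ω) ^ 2 * S ω ∂μ := rfl
  rw [e1, e2, hEQ2, hES2, hEQ, hVarS]
  ring
end

section
/- Let G = α·δ_{σ₁²} + (1−α)·δ_{σ₂²} with 0 < α < 1 and 0 < σ₁² < σ₂². Define f(x) = c − α·(cσ₁²x/(1+cσ₁²x))² − (1−α)·(cσ₂²x/(1+cσ₂²x))². Then the equation f'(x) = 0, equivalently α·σ₁⁴/(1+cσ₁²x)³ + (1−α)·σ₂⁴/(1+cσ₂²x)³ = 0, has exactly one real root x₀ in the domain where x ≠ −1/(cσ₁²) and x ≠ −1/(cσ₂²). -/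
/-- For a two-component mixing distribution G = α·δ_{σ₁²} + (1−α)·δ_{σ₂²}, the
equation α·σ₁⁴/(1+cσ₁²x)³ + (1−α)·σ₂⁴/(1+cσ₂²x)³ = 0 has exactly one real root
away from the poles x = −1/(cσ₁²), x = −1/(cσ₂²). -/
theorem two_component_unique_critical_point
    (c α s1 s2 : ℝ) (hc : 0 < c) (hα0 : 0 < α) (hα1 : α < 1)
    (hs1 : 0 < s1) (hs12 : s1 < s2) :
    ∃! x : ℝ, (x ≠ -1 / (c * s1) ∧ x ≠ -1 / (c * s2)) ∧
      α * s1 ^ 2 / (1 + c * s1 * x) ^ 3 +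
        (1 - α) * s2 ^ 2 / (1 + c * s2 * x) ^ 3 = 0 := by
  have hs2 : 0 < s2 := hs1.trans hs12
  have ha0 : 0 < α * s1 ^ 2 := by positivity
  have hb0 : 0 < (1 - α) * s2 ^ 2 := by
    have : 0 < 1 - α := by linarith
    positivity
  obtain ⟨A, hApos, hA3⟩ : ∃ A : ℝ, 0 < A ∧ A ^ 3 = α * s1 ^ 2 :=
    ⟨(α * s1 ^ 2) ^ ((1:ℝ)/3), Real.rpow_pos_of_pos ha0 _, by
      rw [← Real.rpow_natCast ((α * s1 ^ 2) ^ ((1:ℝ)/3)) 3, ← Real.rpow_mul ha0.le]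
      norm_num⟩
  obtain ⟨B, hBpos, hB3⟩ : ∃ B : ℝ, 0 < B ∧ B ^ 3 = (1 - α) * s2 ^ 2 :=
    ⟨((1 - α) * s2 ^ 2) ^ ((1:ℝ)/3), Real.rpow_pos_of_pos hb0 _, by
      rw [← Real.rpow_natCast (((1 - α) * s2 ^ 2) ^ ((1:ℝ)/3)) 3, ← Real.rpow_mul hb0.le]
      norm_num⟩
  set D : ℝ := B * s1 + A * s2 with hD
  have hDpos : 0 < D := by positivity
  have hcD : c * D ≠ 0 := by positivity
  set x0 : ℝ := -(A + B) / (c * D) with hx0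
  have hu : 1 + c * s1 * x0 = A * (s2 - s1) / D := by
    rw [hx0]; field_simp; ring
  have hv : 1 + c * s2 * x0 = -(B * (s2 - s1)) / D := by
    rw [hx0]; field_simp; ring
  have hupos : 0 < 1 + c * s1 * x0 := by
    rw [hu]; have : 0 < s2 - s1 := by linarith
    positivity
  have hvneg : 1 + c * s2 * x0 < 0 := by
    rw [hv]
    have h1 : 0 < B * (s2 - s1) := by nlinarith
    exact div_neg_of_neg_of_pos (by linarith) hDpos
  have hss : s2 - s1 ≠ 0 := by linarith
  refine ⟨x0, ⟨⟨?_, ?_⟩, ?_⟩, ?_⟩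
  · intro h
    have : (1:ℝ) + c * s1 * (-1 / (c * s1)) = 0 := by field_simp; norm_num
    rw [← h] at this; linarith
  · intro h
    have : (1:ℝ) + c * s2 * (-1 / (c * s2)) = 0 := by field_simp; norm_num
    rw [← h] at this; linarith
  · rw [hu, hv, ← hA3, ← hB3]
    have hD0 : D ≠ 0 := hDpos.ne'
    field_simp
    ring
  · rintro y ⟨⟨hy1, hy2⟩, hy⟩
    have hu0 : 1 + c * s1 * y ≠ 0 := by
      intro h
      apply hy1
      field_simp
      linarith
    have hv0 : 1 + c * s2 * y ≠ 0 := by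
      intro h
      apply hy2
      field_simp
      linarith
    rw [div_add_div _ _ (pow_ne_zero 3 hu0) (pow_ne_zero 3 hv0), div_eq_zero_iff] at hy
    rcases hy with hy | hy
    swap
    · exact absurd hy (by positivity)
    have hkey : (A * (1 + c * s2 * y)) ^ 3 = (-(B * (1 + c * s1 * y))) ^ 3 := by
      linear_combination (1 + c * s2 * y) ^ 3 * hA3 + (1 + c * s1 * y) ^ 3 * hB3 + hy
    have hlin : A * (1 + c * s2 * y) = -(B * (1 + c * s1 * y)) :=
      (Odd.strictMono_pow (R := ℝ) (n := 3) (by decide)).injective hkey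
    rw [hx0]
    rw [eq_div_iff hcD]
    nlinarith [hlin]
end
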